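/- Let γ : [0,L] → ℝⁿ (n ≥ 2) be a unit-speed C^{1,1} curve with γ' 1-Lipschitz (curvature at most 1). Then: (a) for all a, s ∈ [0,L] with |s − a| ≤ π, γ(s) ∈ O_{γ(a)}^c(γ'(a)), i.e. ‖γ(s) − γ(a) − w‖ ≥ 1 for every unit vector w with ⟨w, γ'(a)⟩ = 0; and (b) for a < s₀ in [0,L] with s₀ − a ≤ π, the point γ(s₀) lies on the boundary of O_{γ(a)}^c(γ'(a)) if and only if there is a unit vector w with ⟨w, γ'(a)⟩ = 0 such that γ(s) = γ(a) + sin(s−a)·γ'(a) + (1−cos(s−a))·w for all s ∈ [a, s₀] (γ is a circular arc of radius 1 between γ(a) and γ(s₀)). -/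

import Mathlib

open Set Filter MeasureTheory
open scoped RealInnerProductSpace Topology ENNReal

noncomputable section

/-- Euclidean space `ℝⁿ`. -/
abbrev Euc (n : ℕ) := EuclideanSpace ℝ (Fin n)

/-- Generalized curvature `κγ(s)` of a curve with derivative `γd` and parameter domain `D`:
the limsup, as `x, y → s` with `x ≠ y`, of `∠(γd x, γd y) / |x - y|`, expressed as the
infimum of all eventual bounds. -/
def curvAt {n : ℕ} (γd : ℝ → Euc n) (D : Set ℝ) (s : ℝ) : ℝ :=
  sInf {Λ : ℝ | 0 ≤ Λ ∧ ∃ δ > 0, ∀ x ∈ D, ∀ y ∈ D, x ≠ y →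
    |x - s| < δ → |y - s| < δ →
    InnerProductGeometry.angle (γd x) (γd y) ≤ Λ * |x - y|}

/-- `κγ(s) < Λ`: there are `δ > 0` and `Λ' < Λ` bounding the angle dilation near `s`. -/
def CurvLt {n : ℕ} (γd : ℝ → Euc n) (D : Set ℝ) (s Λ : ℝ) : Prop :=
  ∃ δ > 0, ∃ Λ' < Λ, ∀ x ∈ D, ∀ y ∈ D, x ≠ y → |x - s| < δ → |y - s| < δ →
    InnerProductGeometry.angle (γd x) (γd y) ≤ Λ' * |x - y|

/-- `f` restricted to `[a, c]` is a planar circular arc of radius `1/Λ`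
of length in `[0, 2π/Λ)`. -/
def IsArc {n : ℕ} (Λ : ℝ) (f : ℝ → Euc n) (a c : ℝ) : Prop :=
  c - a < 2 * Real.pi / Λ ∧
  ∃ (o u e : Euc n) (s₁ : ℝ), ‖u‖ = 1 ∧ ‖e‖ = 1 ∧ ⟪u, e⟫ = 0 ∧
    ∀ s ∈ Icc a c,
      f s = o + (Λ⁻¹ * Real.cos (Λ * (s - s₁))) • u + (Λ⁻¹ * Real.sin (Λ * (s - s₁))) • e

/-- `f` restricted to `[a, c]` is a planar circular arc of radius `r`. -/
def IsArcR {n : ℕ} (r : ℝ) (f : ℝ → Euc n) (a c : ℝ) : Prop :=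
  ∃ (o u e : Euc n) (s₁ : ℝ), ‖u‖ = 1 ∧ ‖e‖ = 1 ∧ ⟪u, e⟫ = 0 ∧
    ∀ s ∈ Icc a c,
      f s = o + (r * Real.cos ((s - s₁) / r)) • u + (r * Real.sin ((s - s₁) / r)) • e

/-- `O_p(v, r)`: the union of the open balls of radius `r` tangent to `v^⊥` at `p`. -/
def Odisk {n : ℕ} (p v : Euc n) (r : ℝ) : Set (Euc n) :=
  {x | ∃ w : Euc n, ‖w‖ = 1 ∧ ⟪w, v⟫ = 0 ∧ ‖x - p - r • w‖ < r}

/-- Ball radius `R_O` of the curve `f` (with derivative/tangent field `γd`) on domain `D`. -/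
def RO {n : ℕ} (f γd : ℝ → Euc n) (D : Set ℝ) : ℝ :=
  sInf {r : ℝ | 0 < r ∧ ∃ s ∈ D, ∃ t ∈ D, ∃ w : Euc n,
    ‖w‖ = 1 ∧ ⟪w, γd s⟫ = 0 ∧ ‖f t - f s - r • w‖ < r}

/-- Minimal double critical distance of the curve `f` with tangent field `γd`. -/
def MDC {n : ℕ} (f γd : ℝ → Euc n) : ℝ :=
  sInf {d : ℝ | ∃ x y : ℝ, f x ≠ f y ∧ ⟪f x - f y, γd x⟫ = 0 ∧
    ⟪f x - f y, γd y⟫ = 0 ∧ d = ‖f x - f y‖}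

/-- Normal injectivity radius `i(K, ℝⁿ)` of the curve `f` with tangent field `γd`. -/
def injRad {n : ℕ} (f γd : ℝ → Euc n) : ℝ :=
  sSup ({0} ∪ {r : ℝ | 0 < r ∧ ∀ s t : ℝ, ∀ u w : Euc n,
    ⟪u, γd s⟫ = 0 → ⟪w, γd t⟫ = 0 → ‖u‖ < r → ‖w‖ < r →
    f s + u = f t + w → f s = f t ∧ u = w})

/-- A knot: a simple closed unit-speed `C^{1,1}` curve, as an `L`-periodic map `ℝ → ℝⁿ`,
injective on `[0, L)`, with `‖γ'‖ ≡ 1` and `γ'` Lipschitz. -/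
structure Knot (n : ℕ) where
  L : ℝ
  Lpos : 0 < L
  f : ℝ → Euc n
  fd : ℝ → Euc n
  per : ∀ s, f (s + L) = f s
  perd : ∀ s, fd (s + L) = fd s
  deriv : ∀ s, HasDerivAt f (fd s) s
  unit : ∀ s, ‖fd s‖ = 1
  lipd : ∃ C : NNReal, LipschitzWith C fd
  inj : InjOn f (Ico 0 L)

/-- Ropelength `ℓ_e(γ) = L / R_O(K)`. -/
def Knot.ropelength {n : ℕ} (k : Knot n) : ℝ := k.L / RO k.f k.fd univ

/-- The set `I_c` of parameters realizing the minimal double critical distance. -/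
def Knot.Ic {n : ℕ} (k : Knot n) : Set ℝ :=
  {x | ∃ y : ℝ, k.f x ≠ k.f y ∧ ⟪k.f x - k.f y, k.fd x⟫ = 0 ∧
    ⟪k.f x - k.f y, k.fd y⟫ = 0 ∧ ‖k.f x - k.f y‖ = MDC k.f k.fd}

/-- `sup_s κγ(s)` for a knot. -/
def Knot.supCurv {n : ℕ} (k : Knot n) : ℝ := ⨆ s : ℝ, curvAt k.fd univ s

/-- Analytic focal distance `F_k(γ) = (sup_s κγ(s))⁻¹`. -/
def Knot.Fk {n : ℕ} (k : Knot n) : ℝ := (k.supCurv)⁻¹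

/-- Two knots are in the same knot class: after rescaling their domains to `ℝ/ℤ`
(realized by `1`-periodic maps `ℝ → ℝⁿ`), they are joined by a continuous homotopy
through injective loops. -/
def SameKnotClass {n : ℕ} (k₁ k₂ : Knot n) : Prop :=
  ∃ H : ℝ → ℝ → Euc n,
    ContinuousOn (fun z : ℝ × ℝ => H z.1 z.2) (Icc 0 1 ×ˢ univ) ∧
    (∀ t s, H t (s + 1) = H t s) ∧
    (∀ s, H 0 s = k₁.f (k₁.L * s)) ∧
    (∀ s, H 1 s = k₂.f (k₂.L * s)) ∧
    ∀ t ∈ Icc (0 : ℝ) 1, InjOn (H t) (Ico 0 1)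

/-- A knot is relatively extremal: a relative minimum of ropelength within its knot class
with respect to the `C¹` topology (on rescaled parametrizations). -/
def RelativelyExtremal {n : ℕ} (k : Knot n) : Prop :=
  ∃ ε > 0, ∀ η : Knot n, SameKnotClass k η →
    (∀ s : ℝ, ‖η.f (η.L * s) - k.f (k.L * s)‖ +
      ‖η.L • η.fd (η.L * s) - k.L • k.fd (k.L * s)‖ < ε) →
    k.ropelength ≤ η.ropelength

/-- The class `C(p, q; v, w; Λ)`: unit-speed `C^{1,1}` curves `γ : [0, L] → ℝⁿ`
(`L` not fixed) from `p` to `q` with initial/terminal directions `v, w`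
and `Λ`-Lipschitz derivative (curvature at most `Λ`). -/
structure CurveCC (n : ℕ) (p q v w : Euc n) (Λ : ℝ) where
  L : ℝ
  Lnn : 0 ≤ L
  f : ℝ → Euc n
  fd : ℝ → Euc n
  deriv : ∀ s ∈ Icc (0 : ℝ) L, HasDerivWithinAt f (fd s) (Icc 0 L) s
  unit : ∀ s ∈ Icc (0 : ℝ) L, ‖fd s‖ = 1
  lip : LipschitzOnWith Λ.toNNReal fd (Icc 0 L)
  i0 : f 0 = p
  id0 : fd 0 = v
  iL : f L = q
  idL : fd L = w

/-- A `C¹` closed curve of period `L` with nowhere-vanishing derivative. -/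
structure ClosedC1 (n : ℕ) (L : ℝ) where
  f : ℝ → Euc n
  fd : ℝ → Euc n
  per : ∀ s, f (s + L) = f s
  perd : ∀ s, fd (s + L) = fd s
  deriv : ∀ s, HasDerivAt f (fd s) s
  nz : ∀ s, fd s ≠ 0

/-- A simple closed `C^{1,1}` curve of period `L` with nowhere-vanishing derivative. -/
structure ClosedC11 (n : ℕ) (L : ℝ) extends ClosedC1 n L where
  lipd : ∃ C : NNReal, LipschitzWith C fd
  inj : InjOn f (Ico 0 L)

/-- The unit tangent field of `c` is `C`-Lipschitz with respect to the arclength of `c`. -/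
def TangentLip {n : ℕ} {L : ℝ} (c : ClosedC1 n L) (C : ℝ) : Prop :=
  ∀ x y : ℝ, x ≤ y →
    ‖‖c.fd y‖⁻¹ • c.fd y - ‖c.fd x‖⁻¹ • c.fd x‖ ≤ C * ∫ t in x..y, ‖c.fd t‖

/-- Pointwise geometric focal distance `F_g(γ(s))` of the curve `f` with domain `D`. -/
def FgPt {n : ℕ} (f fd : ℝ → Euc n) (D : Set ℝ) (s : ℝ) : ℝ :=
  sInf {r : ℝ | 0 < r ∧ f s ∈ closure (Odisk (f s) (fd s) r ∩ (f '' D))}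

end

lemma aux_norm_one_of_sq {n : ℕ} {v : Euc n} (h : ‖v‖ ^ 2 = 1) : ‖v‖ = 1 := by
  nlinarith [norm_nonneg v]

lemma aux_inner_comp {n : ℕ} {a b c : Euc n} (ha : ‖a‖ = 1) (hb : ‖b‖ = 1) (hc : ‖c‖ = 1)
    {β₁ β₂ : ℝ} (hβ₁ : 0 ≤ β₁) (hβ₂ : 0 ≤ β₂) (hsum : β₁ + β₂ ≤ Real.pi)
    (h₁ : Real.cos β₁ ≤ ⟪a, b⟫) (h₂ : Real.cos β₂ ≤ ⟪b, c⟫) :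
    Real.cos (β₁ + β₂) ≤ ⟪a, c⟫ := by
  set x := ⟪a, b⟫ with hxdef
  set y := ⟪b, c⟫ with hydef
  have hx : |x| ≤ 1 := by
    have := abs_real_inner_le_norm a b
    simpa [ha, hb] using this
  have hy : |y| ≤ 1 := by
    have := abs_real_inner_le_norm b c
    simpa [hb, hc] using this
  obtain ⟨hx1, hx2⟩ := abs_le.mp hx
  obtain ⟨hy1, hy2⟩ := abs_le.mp hy
  have hbb : ⟪b, b⟫ = 1 := by
    rw [real_inner_self_eq_norm_sq, hb]; norm_num
  have hxb : ‖x • b‖ ^ 2 = x ^ 2 := by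
    rw [norm_smul, hb, mul_one, Real.norm_eq_abs, sq_abs]
  have hyb : ‖y • b‖ ^ 2 = y ^ 2 := by
    rw [norm_smul, hb, mul_one, Real.norm_eq_abs, sq_abs]
  have hna : ‖a - x • b‖ ^ 2 = 1 - x ^ 2 := by
    rw [norm_sub_sq_real, real_inner_smul_right, ← hxdef, hxb, ha]
    ring
  have hnc : ‖c - y • b‖ ^ 2 = 1 - y ^ 2 := by
    rw [norm_sub_sq_real, real_inner_smul_right, ← real_inner_comm c b, ← hydef, hyb, hc]
    ring
  have hna' : ‖a - x • b‖ = Real.sqrt (1 - x ^ 2) := by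
    rw [← hna, Real.sqrt_sq (norm_nonneg _)]
  have hnc' : ‖c - y • b‖ = Real.sqrt (1 - y ^ 2) := by
    rw [← hnc, Real.sqrt_sq (norm_nonneg _)]
  have hexp : ⟪a - x • b, c - y • b⟫ = ⟪a, c⟫ - x * y := by
    rw [inner_sub_left, inner_sub_right, inner_sub_right, real_inner_smul_left,
      real_inner_smul_left, real_inner_smul_right, real_inner_smul_right, hbb]
    have hcb : ⟪b, c⟫ = y := rfl
    rw [hcb]
    have hab : ⟪a, b⟫ = x := rfl
    rw [hab]
    ring
  have hcs : -(‖a - x • b‖ * ‖c - y • b‖) ≤ ⟪a - x • b, c - y • b⟫ :=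
    (abs_le.mp (abs_real_inner_le_norm _ _)).1
  have hkey : x * y - Real.sqrt (1 - x ^ 2) * Real.sqrt (1 - y ^ 2) ≤ ⟪a, c⟫ := by
    rw [hna', hnc', hexp] at hcs
    linarith
  set θ₁ := Real.arccos x with hθ₁def
  set θ₂ := Real.arccos y with hθ₂def
  have hc₁ : Real.cos θ₁ = x := Real.cos_arccos hx1 hx2
  have hc₂ : Real.cos θ₂ = y := Real.cos_arccos hy1 hy2
  have hs₁ : Real.sin θ₁ = Real.sqrt (1 - x ^ 2) := Real.sin_arccos x
  have hs₂ : Real.sin θ₂ = Real.sqrt (1 - y ^ 2) := Real.sin_arccos y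
  have hθ₁β : θ₁ ≤ β₁ := by
    by_contra hcon
    push_neg at hcon
    have := Real.cos_lt_cos_of_nonneg_of_le_pi hβ₁ (Real.arccos_le_pi x) hcon
    rw [hc₁] at this
    linarith
  have hθ₂β : θ₂ ≤ β₂ := by
    by_contra hcon
    push_neg at hcon
    have := Real.cos_lt_cos_of_nonneg_of_le_pi hβ₂ (Real.arccos_le_pi y) hcon
    rw [hc₂] at this
    linarith
  have hcosadd : Real.cos (θ₁ + θ₂) = x * y - Real.sqrt (1 - x ^ 2) * Real.sqrt (1 - y ^ 2) := by
    rw [Real.cos_add, hc₁, hc₂, hs₁, hs₂]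
  have hmono : Real.cos (β₁ + β₂) ≤ Real.cos (θ₁ + θ₂) :=
    Real.cos_le_cos_of_nonneg_of_le_pi
      (add_nonneg (Real.arccos_nonneg x) (Real.arccos_nonneg y)) hsum
      (add_le_add hθ₁β hθ₂β)
  linarith [hcosadd ▸ hmono]

lemma aux_inner_ge_of_close {n : ℕ} {a b : Euc n} (ha : ‖a‖ = 1) (hb : ‖b‖ = 1)
    {h : ℝ} (h0 : 0 ≤ h) (h1 : h ≤ 1 / 2) (hd : ‖a - b‖ ≤ h) :
    Real.cos (h + h ^ 3) ≤ ⟪a, b⟫ := by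
  have hsq : ‖a - b‖ ^ 2 = 1 - 2 * ⟪a, b⟫ + 1 := by
    rw [norm_sub_sq_real, ha, hb]; ring
  have hib : 1 - h ^ 2 / 2 ≤ ⟪a, b⟫ := by
    have h2 : ‖a - b‖ ^ 2 ≤ h ^ 2 := by
      apply pow_le_pow_left₀ (norm_nonneg _) hd
    linarith
  rcases eq_or_lt_of_le h0 with h0' | h0'
  · subst h0'
    norm_num at hib ⊢
    exact hib
  · set y := (h + h ^ 3) / 2 with hy
    have hy0 : 0 < y := by positivity
    have hy1 : y ≤ 1 := by nlinarith
    have hs : y - y ^ 3 / 4 < Real.sin y := by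
      have := Real.sin_gt_sub_cube hy0; linarith [pow_pos hy0 3]
    have hh2 : h ^ 2 ≤ 1 / 4 := by nlinarith
    have h3 : (0:ℝ) ≤ h ^ 3 := by positivity
    have e1 : h ^ 5 ≤ h ^ 3 / 4 := by nlinarith
    have e2 : h ^ 7 ≤ h ^ 3 / 16 := by nlinarith
    have e3 : h ^ 9 ≤ h ^ 3 / 64 := by nlinarith
    have hsin : h / 2 ≤ Real.sin y := by
      have hexp : y - y ^ 3 / 4 - h / 2 = (h ^ 3) / 2 - (h ^ 3 + 3 * h ^ 5 + 3 * h ^ 7 + h ^ 9) / 32 := by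
        rw [hy]; ring
      nlinarith
    have hcos : Real.cos (h + h ^ 3) = 1 - 2 * Real.sin y ^ 2 := by
      have h2y : h + h ^ 3 = 2 * y := by rw [hy]; ring
      rw [h2y, Real.cos_two_mul, Real.cos_sq']
      ring
    rw [hcos]
    have hsin0 : 0 ≤ Real.sin y := le_trans (by linarith) hsin
    nlinarith [mul_self_le_mul_self (by linarith : (0:ℝ) ≤ h / 2) hsin]

lemma aux_turning_aux {n : ℕ} (T : ℝ → Euc n) (A : Set ℝ) (hA : Convex ℝ A)
    (hunit : ∀ t ∈ A, ‖T t‖ = 1)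
    (hlip : ∀ x ∈ A, ∀ y ∈ A, ‖T x - T y‖ ≤ |x - y|) :
    ∀ k : ℕ, ∀ x ∈ A, ∀ y ∈ A, x ≤ y → y - x ≤ 2 ^ k * (1 / 2) →
      (y - x) + (y - x) ^ 3 / 4 ^ k ≤ Real.pi →
      Real.cos ((y - x) + (y - x) ^ 3 / 4 ^ k) ≤ ⟪T x, T y⟫ := by
  intro k
  induction k with
  | zero =>
    intro x hx y hy hxy hlen hpi
    have hd : ‖T x - T y‖ ≤ y - x := by
      have := hlip x hx y hy
      rwa [abs_of_nonpos (by linarith), neg_sub] at this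
    have := aux_inner_ge_of_close (hunit x hx) (hunit y hy) (by linarith)
      (by simpa using hlen) hd
    simpa using this
  | succ k ih =>
    intro x hx y hy hxy hlen hpi
    have hmA : (x + y) / 2 ∈ A := by
      have h := hA hx hy (by norm_num : (0:ℝ) ≤ 1/2) (by norm_num : (0:ℝ) ≤ 1/2)
        (by norm_num : (1:ℝ)/2 + 1/2 = 1)
      have h2 : ((1:ℝ)/2) • x + ((1:ℝ)/2) • y = (x + y)/2 := by
        rw [smul_eq_mul, smul_eq_mul]; ring
      rwa [h2] at h
    have e1 : (x + y)/2 - x = (y - x)/2 := by ring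
    have e2 : y - (x + y)/2 = (y - x)/2 := by ring
    have hhalf_len : (y - x)/2 ≤ 2 ^ k * (1/2) := by
      rw [pow_succ] at hlen; linarith
    have harith : (y - x)/2 + ((y - x)/2) ^ 3 / 4 ^ k
        = ((y - x) + (y - x) ^ 3 / 4 ^ (k+1)) / 2 := by
      rw [pow_succ]
      have h4 : (0:ℝ) < 4 ^ k := by positivity
      field_simp
      ring
    have hhalf_pi : (y - x)/2 + ((y - x)/2) ^ 3 / 4 ^ k ≤ Real.pi := by
      rw [harith]; linarith [Real.pi_pos]
    have hβnn : 0 ≤ (y - x)/2 + ((y - x)/2) ^ 3 / 4 ^ k :=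
      add_nonneg (by linarith) (div_nonneg (pow_nonneg (by linarith) 3) (by positivity))
    have h1 := ih x hx ((x+y)/2) hmA (by linarith) (by rw [e1]; exact hhalf_len)
      (by rw [e1]; exact hhalf_pi)
    rw [e1] at h1
    have h2 := ih ((x+y)/2) hmA y hy (by linarith) (by rw [e2]; exact hhalf_len)
      (by rw [e2]; exact hhalf_pi)
    rw [e2] at h2
    have h3 := aux_inner_comp (hunit x hx) (hunit _ hmA) (hunit y hy)
      hβnn hβnn (by rw [harith]; linarith) h1 h2
    rwa [show (y-x)/2 + ((y-x)/2)^3/4^k + ((y-x)/2 + ((y-x)/2)^3/4^k)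
      = (y-x) + (y-x)^3/4^(k+1) from by rw [harith]; ring] at h3

lemma aux_turning {n : ℕ} (T : ℝ → Euc n) (A : Set ℝ) (hA : Convex ℝ A)
    (hunit : ∀ t ∈ A, ‖T t‖ = 1)
    (hlip : ∀ x ∈ A, ∀ y ∈ A, ‖T x - T y‖ ≤ |x - y|) :
    ∀ x ∈ A, ∀ y ∈ A, x ≤ y → y - x ≤ Real.pi → Real.cos (y - x) ≤ ⟪T x, T y⟫ := by
  intro x hx y hy hxy hpi
  rcases eq_or_lt_of_le hpi with heq | hlt
  · rw [heq, Real.cos_pi]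
    have h := abs_real_inner_le_norm (T x) (T y)
    rw [hunit x hx, hunit y hy, mul_one] at h
    linarith [(abs_le.mp h).1]
  · set d := y - x with hd
    have hd0 : 0 ≤ d := by linarith
    have h4 : Tendsto (fun k : ℕ => d ^ 3 / 4 ^ k) atTop (nhds 0) := by
      have h0 := tendsto_pow_atTop_nhds_zero_of_lt_one
        (by norm_num : (0:ℝ) ≤ 1/4) (by norm_num : (1/4:ℝ) < 1)
      have h1 := h0.const_mul (d ^ 3)
      rw [mul_zero] at h1
      convert h1 using 2 with k
      rw [div_eq_mul_inv, one_div, inv_pow]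
    have htend : Tendsto (fun k : ℕ => Real.cos (d + d ^ 3 / 4 ^ k)) atTop
        (nhds (Real.cos d)) := by
      have h5 : Tendsto (fun k : ℕ => d + d ^ 3 / 4 ^ k) atTop (nhds (d + 0)) :=
        tendsto_const_nhds.add h4
      rw [add_zero] at h5
      exact (Real.continuous_cos.continuousAt.tendsto).comp h5
    apply le_of_tendsto htend
    have hev1 : ∀ᶠ k : ℕ in atTop, d ≤ 2 ^ k * (1 / 2) := by
      filter_upwards [eventually_ge_atTop 3] with k hk
      have h8 : (8:ℝ) ≤ 2 ^ k := by
        calc (8:ℝ) = 2 ^ 3 := by norm_num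
        _ ≤ 2 ^ k := by exact pow_le_pow_right₀ (by norm_num) hk
      have : d < 4 := lt_of_lt_of_le hlt (by linarith [Real.pi_lt_d2])
      linarith
    have hev2 : ∀ᶠ k : ℕ in atTop, d + d ^ 3 / 4 ^ k ≤ Real.pi := by
      have := h4.eventually_lt_const (by linarith : (0:ℝ) < Real.pi - d)
      filter_upwards [this] with k hk
      linarith
    filter_upwards [hev1, hev2] with k h1 h2
    exact aux_turning_aux T A hA hunit hlip k x hx y hy hxy h1 h2

lemma aux_zero_of_nonneg {h : ℝ → ℝ} {p q : ℝ} (hpq : p < q)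
    (hcont : ContinuousOn h (Icc p q)) (hnn : ∀ x ∈ Icc p q, 0 ≤ h x)
    (hint : ∫ x in p..q, h x = 0) : ∀ x ∈ Icc p q, h x = 0 := by
  by_contra hcon
  push_neg at hcon
  obtain ⟨x₀, hx₀, hne⟩ := hcon
  obtain ⟨hx₀1, hx₀2⟩ := hx₀
  have hpos : 0 < h x₀ := lt_of_le_of_ne (hnn x₀ ⟨hx₀1, hx₀2⟩) (Ne.symm hne)
  have hev : ∀ᶠ y in nhdsWithin x₀ (Icc p q), h x₀ / 2 < h y :=
    (hcont x₀ ⟨hx₀1, hx₀2⟩).eventually (eventually_gt_nhds (by linarith))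
  obtain ⟨U, hUopen, hx₀U, hUsub⟩ := mem_nhdsWithin.mp hev
  obtain ⟨δ, hδ, hball⟩ := Metric.isOpen_iff.mp hUopen x₀ hx₀U
  obtain ⟨u₁, u₂, hpu₁, hu₂q, h12, hu₁x, hxu₂⟩ :
      ∃ u₁ u₂, p ≤ u₁ ∧ u₂ ≤ q ∧ u₁ < u₂ ∧ x₀ - δ/2 ≤ u₁ ∧ u₂ ≤ x₀ + δ/2 := by
    refine ⟨max p (x₀ - δ/2), min q (x₀ + δ/2), le_max_left _ _, min_le_left _ _, ?_,
      le_max_right _ _, min_le_right _ _⟩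
    apply max_lt <;> apply lt_min
    · exact hpq
    · linarith
    · linarith
    · linarith
  have hsub : Icc u₁ u₂ ⊆ Icc p q := Icc_subset_Icc hpu₁ hu₂q
  have hmem : ∀ y ∈ Icc u₁ u₂, h x₀ / 2 < h y := by
    intro y hy
    apply hUsub
    refine ⟨hball ?_, hsub hy⟩
    rw [Metric.mem_ball, Real.dist_eq, abs_lt]
    constructor
    · linarith [hy.1]
    · linarith [hy.2]
  have hi1 : IntervalIntegrable h volume p u₁ :=
    (hcont.mono (Icc_subset_Icc le_rfl (by linarith))).intervalIntegrable_of_Icc hpu₁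
  have hi2 : IntervalIntegrable h volume u₁ u₂ :=
    (hcont.mono hsub).intervalIntegrable_of_Icc h12.le
  have hi3 : IntervalIntegrable h volume u₂ q :=
    (hcont.mono (Icc_subset_Icc (by linarith) le_rfl)).intervalIntegrable_of_Icc hu₂q
  have hsplit : ∫ x in p..q, h x
      = ((∫ x in p..u₁, h x) + ∫ x in u₁..u₂, h x) + ∫ x in u₂..q, h x := by
    rw [intervalIntegral.integral_add_adjacent_intervals hi1 hi2,
      intervalIntegral.integral_add_adjacent_intervals (hi1.trans hi2) hi3]
  have hn1 : 0 ≤ ∫ x in p..u₁, h x := by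
    apply intervalIntegral.integral_nonneg hpu₁
    intro u hu
    exact hnn u ⟨hu.1, by linarith [hu.2]⟩
  have hn3 : 0 ≤ ∫ x in u₂..q, h x := by
    apply intervalIntegral.integral_nonneg hu₂q
    intro u hu
    exact hnn u ⟨by linarith [hu.1], hu.2⟩
  have hn2 : (u₂ - u₁) * (h x₀ / 2) ≤ ∫ x in u₁..u₂, h x := by
    have := intervalIntegral.integral_mono_on h12.le
      (intervalIntegrable_const : IntervalIntegrable (fun _ => h x₀ / 2) volume u₁ u₂) hi2
      (fun y hy => (hmem y hy).le)
    rwa [intervalIntegral.integral_const, smul_eq_mul] at this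
  have hgt : 0 < ∫ x in p..q, h x := by
    rw [hsplit]
    have : 0 < (u₂ - u₁) * (h x₀ / 2) := mul_pos (by linarith) (by linarith)
    linarith
  rw [hint] at hgt
  exact lt_irrefl _ hgt

lemma aux_ftc {n : ℕ} {L : ℝ} {f fd : ℝ → Euc n}
    (hderiv : ∀ s ∈ Icc (0:ℝ) L, HasDerivWithinAt f (fd s) (Icc 0 L) s)
    (hlip : LipschitzOnWith 1 fd (Icc 0 L))
    {a b : ℝ} (hab : a ≤ b) (h0 : 0 ≤ a) (hL : b ≤ L) :
    ∫ t in a..b, fd t = f b - f a := by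
  have hsub : Icc a b ⊆ Icc 0 L := Icc_subset_Icc h0 hL
  apply intervalIntegral.integral_eq_sub_of_hasDeriv_right_of_le hab
  · intro x hx
    exact ((hderiv x (hsub hx)).continuousWithinAt).mono hsub
  · intro x hx
    have hx' : x ∈ Icc (0:ℝ) L := hsub (Ioo_subset_Icc_self hx)
    refine (hderiv x hx').mono_of_mem_nhdsWithin ?_
    rw [mem_nhdsWithin]
    refine ⟨Iio L, isOpen_Iio, lt_of_lt_of_le hx.2 hL, ?_⟩
    rintro y ⟨hy1, hy2⟩
    exact ⟨le_of_lt (lt_of_le_of_lt (le_trans h0 hx.1.le) hy2), hy1.le⟩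
  · exact (hlip.continuousOn.mono hsub).intervalIntegrable_of_Icc hab

set_option maxHeartbeats 3000000 in
lemma aux_core {n : ℕ} {L : ℝ} {f fd : ℝ → Euc n}
    (hderiv : ∀ t ∈ Icc (0:ℝ) L, HasDerivWithinAt f (fd t) (Icc 0 L) t)
    (hunit : ∀ t ∈ Icc (0:ℝ) L, ‖fd t‖ = 1)
    (hlip : LipschitzOnWith 1 fd (Icc 0 L))
    {a s : ℝ} (ha : a ∈ Icc (0:ℝ) L) (hs : s ∈ Icc (0:ℝ) L)
    (has : a ≤ s) (hsa : s - a ≤ Real.pi)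
    {w : Euc n} (hw : ‖w‖ = 1) (hwa : ⟪w, fd a⟫ = 0) :
    1 ≤ ‖f s - f a - w‖ ∧
      (‖f s - f a - w‖ = 1 → a < s → ∀ u ∈ Icc a s,
        f u = f a + Real.sin (u - a) • fd a + (1 - Real.cos (u - a)) • w) := by
  have hfda : ‖fd a‖ = 1 := hunit a ha
  have hw2' : ⟪fd a, w⟫ = 0 := by rw [← real_inner_comm]; exact hwa
  have hff : ⟪fd a, fd a⟫ = 1 := by rw [real_inner_self_eq_norm_sq, hfda]; norm_num
  have hww : ⟪w, w⟫ = 1 := by rw [real_inner_self_eq_norm_sq, hw]; norm_num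
  set p := s - Real.pi with hp
  have hspi : s - p = Real.pi := by rw [hp]; ring
  have hpa : p ≤ a := by rw [hp]; linarith
  have hps : p ≤ s := by rw [hp]; linarith [Real.pi_pos]
  have hps' : p < s := by rw [hp]; linarith [Real.pi_pos]
  have hinner2 : ∀ x₁ y₁ x₂ y₂ : ℝ,
      ⟪x₁ • fd a + y₁ • w, x₂ • fd a + y₂ • w⟫ = x₁ * x₂ + y₁ * y₂ := by
    intro x₁ y₁ x₂ y₂
    simp only [inner_add_left, inner_add_right, real_inner_smul_left, real_inner_smul_right,
      hff, hww, hwa, hw2']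
    ring
  have hcombo : ∀ x₁ y₁ : ℝ, x₁ ^ 2 + y₁ ^ 2 = 1 → ‖x₁ • fd a + y₁ • w‖ = 1 := by
    intro x₁ y₁ hxy
    have h2 : ‖x₁ • fd a + y₁ • w‖ ^ 2 = 1 := by
      rw [← real_inner_self_eq_norm_sq, hinner2]
      nlinarith
    nlinarith [norm_nonneg (x₁ • fd a + y₁ • w)]
  have hcirc_fda : ∀ t : ℝ,
      ⟪Real.cos (t - a) • fd a + Real.sin (t - a) • w, fd a⟫ = Real.cos (t - a) := by
    intro t
    simp only [inner_add_left, real_inner_smul_left, hff, hwa]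
    ring
  have hlipn : ∀ x ∈ Icc (0:ℝ) L, ∀ y ∈ Icc (0:ℝ) L, ‖fd x - fd y‖ ≤ |x - y| := by
    intro x hx y hy
    have h := hlip.dist_le_mul x hx y hy
    rw [dist_eq_norm, Real.dist_eq] at h
    simpa using h
  have hturn := aux_turning fd (Icc 0 L) (convex_Icc 0 L) hunit hlipn
  set G : ℝ → Euc n := fun t =>
    Real.cos (min t a - a) • fd a + Real.sin (min t a - a) • w + (fd (max t a) - fd a)
    with hGdef
  have hGcirc : ∀ t, t ≤ a → G t = Real.cos (t - a) • fd a + Real.sin (t - a) • w := by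
    intro t ht
    rw [hGdef]
    dsimp only
    rw [min_eq_left ht, max_eq_right ht, sub_self, add_zero]
  have hGcurve : ∀ t, a ≤ t → G t = fd t := by
    intro t ht
    rw [hGdef]
    dsimp only
    rw [min_eq_right ht, max_eq_left ht, sub_self, Real.cos_zero, Real.sin_zero,
      one_smul, zero_smul, add_zero]
    abel
  have hGa : G a = fd a := hGcurve a le_rfl
  have hfd_cont : ContinuousOn fd (Icc (0:ℝ) L) := hlip.continuousOn
  have hmaps : MapsTo (fun t => max t a) (Icc p s) (Icc (0:ℝ) L) := by
    intro t ht
    exact ⟨le_trans ha.1 (le_max_right _ _), max_le (le_trans ht.2 hs.2) ha.2⟩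
  have hGcont : ContinuousOn G (Icc p s) := by
    rw [hGdef]
    apply ContinuousOn.add
    · apply ContinuousOn.add
      · exact ((Real.continuous_cos.comp ((continuous_id.min continuous_const).sub
          continuous_const)).smul continuous_const).continuousOn
      · exact ((Real.continuous_sin.comp ((continuous_id.min continuous_const).sub
          continuous_const)).smul continuous_const).continuousOn
    · exact (hfd_cont.comp (continuous_id.max continuous_const).continuousOn hmaps).sub
        continuousOn_const
  -- pointwise lower bound on inner products
  have hgeq : ∀ t ∈ Icc p s, ∀ u ∈ Icc p s, Real.cos (t - u) ≤ ⟪G t, G u⟫ := by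
    have H : ∀ t ∈ Icc p s, ∀ u ∈ Icc p s, t ≤ u → Real.cos (u - t) ≤ ⟪G t, G u⟫ := by
      intro t ht u hu htu
      rcases le_total u a with hua | hau
      · rw [hGcirc t (le_trans htu hua), hGcirc u hua, hinner2]
        have hcs : Real.cos (t - a) * Real.cos (u - a) + Real.sin (t - a) * Real.sin (u - a)
            = Real.cos ((t - a) - (u - a)) := (Real.cos_sub _ _).symm
        rw [hcs, show (t - a) - (u - a) = -(u - t) from by ring, Real.cos_neg]
      · rcases le_total a t with hat | hta
        · rw [hGcurve t hat, hGcurve u (le_trans hat htu)]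
          exact hturn t ⟨le_trans ha.1 hat, le_trans ht.2 hs.2⟩
            u ⟨le_trans ha.1 hau, le_trans hu.2 hs.2⟩ htu (by linarith [hu.2, ht.1])
        · rw [hGcirc t hta, hGcurve u hau]
          have hnt : ‖Real.cos (t - a) • fd a + Real.sin (t - a) • w‖ = 1 :=
            hcombo _ _ (Real.cos_sq_add_sin_sq _)
          have h1 : Real.cos (a - t) ≤ ⟪Real.cos (t - a) • fd a + Real.sin (t - a) • w, fd a⟫ := by
            rw [hcirc_fda, show a - t = -(t - a) from by ring, Real.cos_neg]
          have hu' : u ∈ Icc (0:ℝ) L := ⟨le_trans ha.1 hau, le_trans hu.2 hs.2⟩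
          have h2 : Real.cos (u - a) ≤ ⟪fd a, fd u⟫ :=
            hturn a ha u hu' hau (by linarith [hu.2])
          have h3 := aux_inner_comp hnt hfda (hunit u hu')
            (by linarith : (0:ℝ) ≤ a - t) (by linarith : (0:ℝ) ≤ u - a)
            (by rw [show (a - t) + (u - a) = u - t from by ring]; linarith [ht.1, hu.2]) h1 h2
          rwa [show (a - t) + (u - a) = u - t from by ring] at h3
    intro t ht u hu
    rcases le_total t u with h | h
    · rw [show t - u = -(u - t) from by ring, Real.cos_neg]
      exact H t ht u hu h
    · have h5 := H u hu t ht h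
      exact h5.trans (le_of_eq (real_inner_comm (G t) (G u)))
  -- integral identities
  have hcosint : ∀ u x y : ℝ, ∫ t in x..y, Real.cos (u - t) = Real.sin (u - x) - Real.sin (u - y) := by
    intro u x y
    rw [intervalIntegral.integral_comp_sub_left Real.cos u, integral_cos]
  have hcosint2 : ∀ x y c : ℝ, ∫ t in x..y, Real.cos (t - c) = Real.sin (y - c) - Real.sin (x - c) := by
    intro x y c
    rw [intervalIntegral.integral_comp_sub_right Real.cos c, integral_cos]
  have hsinint2 : ∀ x y c : ℝ, ∫ t in x..y, Real.sin (t - c) = Real.cos (x - c) - Real.cos (y - c) := by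
    intro x y c
    rw [intervalIntegral.integral_comp_sub_right Real.sin c, integral_sin]
  set V := ∫ t in p..s, G t with hVdef
  have hIOn : IntegrableOn G (Ioc p s) volume :=
    (hGcont.integrableOn_Icc).mono_set Ioc_subset_Icc_self
  have hinnerV : ∀ c : Euc n, ∫ t in p..s, ⟪c, G t⟫ = ⟪c, V⟫ := by
    intro c
    rw [hVdef, intervalIntegral.integral_of_le hps, intervalIntegral.integral_of_le hps]
    exact integral_inner hIOn c
  have hVsq : ‖V‖ ^ 2 = ∫ u in p..s, ⟪V, G u⟫ := by
    rw [← real_inner_self_eq_norm_sq]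
    exact (hinnerV V).symm
  have hiρ : IntervalIntegrable (fun u => ⟪V, G u⟫) volume p s :=
    (continuousOn_const.inner hGcont).intervalIntegrable_of_Icc hps
  have hib : IntervalIntegrable (fun u => Real.sin (u - p) - Real.sin (u - s)) volume p s :=
    (((Real.continuous_sin.comp (continuous_id.sub continuous_const))).sub
      ((Real.continuous_sin.comp (continuous_id.sub continuous_const)))).intervalIntegrable p s
  have hrowge : ∀ u ∈ Icc p s, Real.sin (u - p) - Real.sin (u - s) ≤ ⟪V, G u⟫ := by
    intro u hu
    rw [← real_inner_comm V (G u), ← hinnerV (G u), ← hcosint u p s]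
    apply intervalIntegral.integral_mono_on hps
      ((Real.continuous_cos.comp (continuous_const.sub continuous_id)).intervalIntegrable p s)
      ((continuousOn_const.inner hGcont).intervalIntegrable_of_Icc hps)
    intro t ht
    exact hgeq u hu t ht
  have hsin1 : IntervalIntegrable (fun u : ℝ => Real.sin (u - p)) volume p s :=
    (Real.continuous_sin.comp (continuous_sub_right p)).intervalIntegrable p s
  have hsin2 : IntervalIntegrable (fun u : ℝ => Real.sin (u - s)) volume p s :=
    (Real.continuous_sin.comp (continuous_sub_right s)).intervalIntegrable p s
  have h4int : ∫ u in p..s, (Real.sin (u - p) - Real.sin (u - s)) = 4 := by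
    rw [intervalIntegral.integral_sub hsin1 hsin2, hsinint2 p s p, hsinint2 p s s]
    rw [hspi, show p - s = -Real.pi from by rw [hp]; ring,
      show p - p = (0:ℝ) from by ring, show s - s = (0:ℝ) from by ring]
    norm_num [Real.cos_pi]
  have houter : (4:ℝ) ≤ ∫ u in p..s, ⟪V, G u⟫ := by
    rw [← h4int]
    exact intervalIntegral.integral_mono_on hps hib hiρ hrowge
  have hV4 : (4:ℝ) ≤ ‖V‖ ^ 2 := by rw [hVsq]; exact houter
  have hV2 : (2:ℝ) ≤ ‖V‖ := by nlinarith [norm_nonneg V]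
  -- compute V
  have hGi_pa : IntervalIntegrable G volume p a :=
    (hGcont.mono (Icc_subset_Icc le_rfl has)).intervalIntegrable_of_Icc hpa
  have hGi_as : IntervalIntegrable G volume a s :=
    (hGcont.mono (Icc_subset_Icc hpa le_rfl)).intervalIntegrable_of_Icc has
  have hleft : ∫ t in p..a, G t = Real.sin (a - p) • fd a + (Real.cos (a - p) - 1) • w := by
    have hEq : EqOn G (fun t => Real.cos (t - a) • fd a + Real.sin (t - a) • w) (uIcc p a) := by
      intro t ht
      rw [uIcc_of_le hpa] at ht
      exact hGcirc t ht.2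
    have hic : IntervalIntegrable (fun t : ℝ => Real.cos (t - a) • fd a) volume p a :=
      ((Real.continuous_cos.comp (continuous_sub_right a)).smul continuous_const).intervalIntegrable p a
    have his : IntervalIntegrable (fun t : ℝ => Real.sin (t - a) • w) volume p a :=
      ((Real.continuous_sin.comp (continuous_sub_right a)).smul continuous_const).intervalIntegrable p a
    rw [intervalIntegral.integral_congr hEq, intervalIntegral.integral_add hic his,
      intervalIntegral.integral_smul_const, intervalIntegral.integral_smul_const,
      hcosint2 p a a, hsinint2 p a a]
    have e1 : Real.sin (a - a) - Real.sin (p - a) = Real.sin (a - p) := by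
      rw [sub_self, Real.sin_zero, show p - a = -(a - p) from by ring, Real.sin_neg]; ring
    have e2 : Real.cos (p - a) - Real.cos (a - a) = Real.cos (a - p) - 1 := by
      rw [sub_self, Real.cos_zero, show p - a = -(a - p) from by ring, Real.cos_neg]
    rw [e1, e2]
  have hright : ∫ t in a..s, G t = f s - f a := by
    have hEq : EqOn G fd (uIcc a s) := by
      intro t ht
      rw [uIcc_of_le has] at ht
      exact hGcurve t ht.1
    rw [intervalIntegral.integral_congr hEq]
    exact aux_ftc hderiv hlip has ha.1 hs.2
  have hXYv : V = (f s - f a - w) + (Real.sin (a - p) • fd a + Real.cos (a - p) • w) := by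
    rw [hVdef, ← intervalIntegral.integral_add_adjacent_intervals hGi_pa hGi_as, hleft, hright,
      sub_smul, one_smul]
    abel
  have hY1 : ‖Real.sin (a - p) • fd a + Real.cos (a - p) • w‖ = 1 :=
    hcombo _ _ (Real.sin_sq_add_cos_sq (a - p))
  have hpart1 : 1 ≤ ‖f s - f a - w‖ := by
    have hna := norm_add_le (f s - f a - w) (Real.sin (a - p) • fd a + Real.cos (a - p) • w)
    rw [← hXYv, hY1] at hna
    linarith
  refine ⟨hpart1, ?_⟩
  intro hXeq hlt u hu
  have haP : a ∈ Icc p s := ⟨hpa, has⟩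
  have hVeq2 : ‖V‖ = 2 := by
    have hle : ‖V‖ ≤ 2 := by
      calc ‖V‖ = ‖(f s - f a - w) + (Real.sin (a - p) • fd a + Real.cos (a - p) • w)‖ := by
            rw [hXYv]
      _ ≤ ‖f s - f a - w‖ + ‖Real.sin (a - p) • fd a + Real.cos (a - p) • w‖ := norm_add_le _ _
      _ = 2 := by rw [hXeq, hY1]; norm_num
    linarith
  have hint0 : ∫ u' in p..s, (⟪V, G u'⟫ - (Real.sin (u' - p) - Real.sin (u' - s))) = 0 := by
    rw [intervalIntegral.integral_sub hiρ hib, h4int, ← hVsq, hVeq2]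
    norm_num
  have hz1 := aux_zero_of_nonneg
    (h := fun u' => ⟪V, G u'⟫ - (Real.sin (u' - p) - Real.sin (u' - s))) hps'
    ((continuousOn_const.inner hGcont).sub
      (((Real.continuous_sin.comp (continuous_sub_right p)).sub
        (Real.continuous_sin.comp (continuous_sub_right s))).continuousOn))
    (fun x hx => sub_nonneg.mpr (hrowge x hx)) hint0
  have hE1 : ∀ u' ∈ Icc p s, ∀ t ∈ Icc p s, ⟪G t, G u'⟫ = Real.cos (u' - t) := by
    intro u' hu'
    have hint1 : ∫ t in p..s, (⟪G u', G t⟫ - Real.cos (u' - t)) = 0 := by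
      have hgi : IntervalIntegrable (fun t : ℝ => ⟪G u', G t⟫) volume p s :=
        (continuousOn_const.inner hGcont).intervalIntegrable_of_Icc hps
      have hci : IntervalIntegrable (fun t : ℝ => Real.cos (u' - t)) volume p s :=
        (Real.continuous_cos.comp (continuous_const.sub continuous_id)).intervalIntegrable p s
      rw [intervalIntegral.integral_sub hgi hci, hinnerV (G u'), hcosint u' p s]
      have hcomm : ⟪G u', V⟫ = ⟪V, G u'⟫ := real_inner_comm V (G u')
      rw [hcomm]
      exact hz1 u' hu'
    have hz2 := aux_zero_of_nonneg
      (h := fun t => ⟪G u', G t⟫ - Real.cos (u' - t)) hps'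
      ((continuousOn_const.inner hGcont).sub
        ((Real.continuous_cos.comp (continuous_const.sub continuous_id)).continuousOn))
      (fun t ht => sub_nonneg.mpr (hgeq u' hu' t ht)) hint1
    intro t ht
    have h' : ⟪G u', G t⟫ = Real.cos (u' - t) := sub_eq_zero.mp (hz2 t ht)
    exact (real_inner_comm (G u') (G t)).trans h'
  have hip : ⟪f s - f a - w, Real.sin (a - p) • fd a + Real.cos (a - p) • w⟫ = 1 := by
    have hns := norm_add_sq_real (f s - f a - w) (Real.sin (a - p) • fd a + Real.cos (a - p) • w)
    rw [← hXYv, hVeq2, hXeq, hY1] at hns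
    linarith [hns]
  have hXY : f s - f a - w = Real.sin (a - p) • fd a + Real.cos (a - p) • w := by
    have hns := norm_sub_sq_real (f s - f a - w) (Real.sin (a - p) • fd a + Real.cos (a - p) • w)
    rw [hXeq, hY1, hip] at hns
    norm_num at hns
    exact sub_eq_zero.mp hns
  have hfs2 : f s - f a = Real.sin (a - p) • fd a + (Real.cos (a - p) + 1) • w := by
    calc f s - f a = (f s - f a - w) + w := by abel
    _ = Real.sin (a - p) • fd a + Real.cos (a - p) • w + w := by rw [hXY]
    _ = Real.sin (a - p) • fd a + (Real.cos (a - p) + 1) • w := by rw [add_smul, one_smul]; abel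
  have hfdIOn : IntegrableOn fd (Ioc a s) volume :=
    ((hfd_cont.mono (Icc_subset_Icc ha.1 hs.2)).integrableOn_Icc).mono_set Ioc_subset_Icc_self
  have hfd_form : ∀ v ∈ Icc a s, fd v = Real.cos (v - a) • fd a + Real.sin (v - a) • w := by
    intro v hv
    have hvP : v ∈ Icc p s := ⟨le_trans hpa hv.1, hv.2⟩
    have h0v : v ∈ Icc (0:ℝ) L := ⟨le_trans ha.1 hv.1, le_trans hv.2 hs.2⟩
    have e1 : ⟪fd a, fd v⟫ = Real.cos (v - a) := by
      have h := hE1 v hvP a haP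
      rwa [hGa, hGcurve v hv.1] at h
    have e1' : ⟪fd v, fd a⟫ = Real.cos (v - a) := (real_inner_comm (fd a) (fd v)).trans e1
    have e2 : ⟪fd v, f s - f a⟫ = Real.sin (v - a) - Real.sin (v - s) := by
      have hint : ∫ t in a..s, ⟪fd v, fd t⟫ = ⟪fd v, f s - f a⟫ := by
        rw [← aux_ftc hderiv hlip has ha.1 hs.2,
          intervalIntegral.integral_of_le has, intervalIntegral.integral_of_le has]
        exact integral_inner hfdIOn (fd v)
      have hcongr : ∫ t in a..s, ⟪fd v, fd t⟫ = ∫ t in a..s, Real.cos (v - t) := by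
        apply intervalIntegral.integral_congr
        intro t ht
        rw [uIcc_of_le has] at ht
        have h := hE1 v hvP t ⟨le_trans hpa ht.1, ht.2⟩
        rw [hGcurve t ht.1, hGcurve v hv.1] at h
        exact (real_inner_comm (fd t) (fd v)).trans h
      calc ⟪fd v, f s - f a⟫ = ∫ t in a..s, Real.cos (v - t) := by rw [← hint, hcongr]
      _ = Real.sin (v - a) - Real.sin (v - s) := hcosint v a s
    have e3 : ⟪fd v, w⟫ = Real.sin (v - a) := by
      have h2 := e2
      rw [hfs2, inner_add_right, real_inner_smul_right, real_inner_smul_right, e1'] at h2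
      have i1 : Real.sin (a - p) = Real.sin (s - a) := by
        rw [show a - p = Real.pi - (s - a) from by rw [hp]; ring, Real.sin_pi_sub]
      have i2 : Real.cos (a - p) = -Real.cos (s - a) := by
        rw [show a - p = Real.pi - (s - a) from by rw [hp]; ring, Real.cos_pi_sub]
      have i3 : Real.sin (v - s)
          = Real.sin (v - a) * Real.cos (s - a) - Real.cos (v - a) * Real.sin (s - a) := by
        rw [show v - s = (v - a) - (s - a) from by ring, Real.sin_sub]
      rw [i1, i2, i3] at h2
      have hcos1 : Real.cos (s - a) < 1 := by
        have h := Real.cos_lt_cos_of_nonneg_of_le_pi (le_refl (0:ℝ)) hsa (by linarith)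
        rwa [Real.cos_zero] at h
      have hfactor : (1 - Real.cos (s - a)) * ⟪fd v, w⟫
          = (1 - Real.cos (s - a)) * Real.sin (v - a) := by linear_combination h2
      exact mul_left_cancel₀ (by linarith : (1:ℝ) - Real.cos (s - a) ≠ 0) hfactor
    have hnz : ‖fd v - (Real.cos (v - a) • fd a + Real.sin (v - a) • w)‖ ^ 2 = 0 := by
      rw [norm_sub_sq_real, hunit v h0v, inner_add_right, real_inner_smul_right,
        real_inner_smul_right, e1', e3, hcombo _ _ (Real.cos_sq_add_sin_sq (v - a))]
      nlinarith [Real.sin_sq_add_cos_sq (v - a)]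
    exact sub_eq_zero.mp (norm_eq_zero.mp ((pow_eq_zero_iff (by norm_num : (2:ℕ) ≠ 0)).mp hnz))
  -- integrate the tangent formula
  have hftcu : ∫ t in a..u, fd t = f u - f a :=
    aux_ftc hderiv hlip hu.1 ha.1 (le_trans hu.2 hs.2)
  have hcongr2 : ∫ t in a..u, fd t
      = ∫ t in a..u, (Real.cos (t - a) • fd a + Real.sin (t - a) • w) := by
    apply intervalIntegral.integral_congr
    intro t ht
    rw [uIcc_of_le hu.1] at ht
    exact hfd_form t ⟨ht.1, le_trans ht.2 hu.2⟩
  have hval : ∫ t in a..u, (Real.cos (t - a) • fd a + Real.sin (t - a) • w)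
      = Real.sin (u - a) • fd a + (1 - Real.cos (u - a)) • w := by
    have hic : IntervalIntegrable (fun t : ℝ => Real.cos (t - a) • fd a) volume a u :=
      ((Real.continuous_cos.comp (continuous_sub_right a)).smul continuous_const).intervalIntegrable a u
    have his : IntervalIntegrable (fun t : ℝ => Real.sin (t - a) • w) volume a u :=
      ((Real.continuous_sin.comp (continuous_sub_right a)).smul continuous_const).intervalIntegrable a u
    rw [intervalIntegral.integral_add hic his,
      intervalIntegral.integral_smul_const, intervalIntegral.integral_smul_const,
      hcosint2 a u a, hsinint2 a u a]
    rw [sub_self, Real.sin_zero, Real.cos_zero, sub_zero]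
  have hfinal : f u - f a = Real.sin (u - a) • fd a + (1 - Real.cos (u - a)) • w := by
    rw [← hftcu, hcongr2, hval]
  rw [add_assoc]
  exact eq_add_of_sub_eq' hfinal

lemma aux_rev {n : ℕ} {L : ℝ} {f fd : ℝ → Euc n}
    (hderiv : ∀ t ∈ Icc (0:ℝ) L, HasDerivWithinAt f (fd t) (Icc 0 L) t)
    (hunit : ∀ t ∈ Icc (0:ℝ) L, ‖fd t‖ = 1)
    (hlip : LipschitzOnWith 1 fd (Icc 0 L))
    {a s : ℝ} (ha : a ∈ Icc (0:ℝ) L) (hs : s ∈ Icc (0:ℝ) L)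
    (hsa : s ≤ a) (hd : a - s ≤ Real.pi)
    {w : Euc n} (hw : ‖w‖ = 1) (hwa : ⟪w, fd a⟫ = 0) : 1 ≤ ‖f s - f a - w‖ := by
  have hmem : ∀ t ∈ Icc (0:ℝ) L, L - t ∈ Icc (0:ℝ) L := fun t ht =>
    ⟨by linarith [ht.2], by linarith [ht.1]⟩
  have hderiv' : ∀ t ∈ Icc (0:ℝ) L,
      HasDerivWithinAt (fun u => f (L - u)) (-fd (L - t)) (Icc 0 L) t := by
    intro t ht
    have hinner : HasDerivWithinAt (fun u : ℝ => L - u) (-1) (Icc (0:ℝ) L) t :=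
      (hasDerivWithinAt_id t _).const_sub L
    have h := (hderiv (L - t) (hmem t ht)).scomp t hinner (fun u hu => hmem u hu)
    rw [neg_one_smul] at h
    exact h
  have hunit' : ∀ t ∈ Icc (0:ℝ) L, ‖-fd (L - t)‖ = 1 := fun t ht => by
    rw [norm_neg]; exact hunit _ (hmem t ht)
  have hlip' : LipschitzOnWith 1 (fun t => -fd (L - t)) (Icc (0:ℝ) L) := by
    apply LipschitzOnWith.of_dist_le_mul
    intro x hx y hy
    have h1 := hlip.dist_le_mul (L - x) (hmem x hx) (L - y) (hmem y hy)
    calc dist (-fd (L - x)) (-fd (L - y)) = dist (fd (L - x)) (fd (L - y)) := dist_neg_neg _ _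
    _ ≤ 1 * dist (L - x) (L - y) := h1
    _ = 1 * dist x y := by
        rw [Real.dist_eq, Real.dist_eq, show L - x - (L - y) = -(x - y) from by ring, abs_neg]
  have hwa' : ⟪w, -fd (L - (L - a))⟫ = 0 := by
    rw [show L - (L - a) = a from by ring, inner_neg_right, hwa, neg_zero]
  have hc := (aux_core hderiv' hunit' hlip' (hmem a ha) (hmem s hs) (by linarith)
    (by rw [show L - s - (L - a) = a - s from by ring]; exact hd) hw hwa').1
  simp only [show L - (L - s) = s from by ring, show L - (L - a) = a from by ring] at hc
  exact hc


/-- A unit-speed curve with curvature at most `1` stays outside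
`O_{γ(a)}(γ'(a), 1)` for `|s - a| ≤ π`, and it touches the boundary of `O_{γ(a)}^c(γ'(a))`
at `γ(s₀)` (with `a < s₀ ≤ a + π`) iff it is a unit circular arc on `[a, s₀]`. -/
theorem statement_9 {n : ℕ} (hn : 2 ≤ n) (L : ℝ) (hL : 0 ≤ L) (f fd : ℝ → Euc n)
    (hderiv : ∀ s ∈ Set.Icc (0 : ℝ) L, HasDerivWithinAt f (fd s) (Set.Icc 0 L) s)
    (hunit : ∀ s ∈ Set.Icc (0 : ℝ) L, ‖fd s‖ = 1)
    (hlip : LipschitzOnWith 1 fd (Set.Icc 0 L)) :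
    (∀ a ∈ Set.Icc (0 : ℝ) L, ∀ s ∈ Set.Icc (0 : ℝ) L, |s - a| ≤ Real.pi →
      ∀ w : Euc n, ‖w‖ = 1 → ⟪w, fd a⟫ = 0 → 1 ≤ ‖f s - f a - w‖) ∧
    (∀ a ∈ Set.Icc (0 : ℝ) L, ∀ s₀ ∈ Set.Icc (0 : ℝ) L, a < s₀ → s₀ - a ≤ Real.pi →
      ((f s₀ ∉ Odisk (f a) (fd a) 1 ∧
          ∃ w : Euc n, ‖w‖ = 1 ∧ ⟪w, fd a⟫ = 0 ∧ ‖f s₀ - f a - w‖ = 1) ↔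
        (∃ w : Euc n, ‖w‖ = 1 ∧ ⟪w, fd a⟫ = 0 ∧ ∀ s ∈ Set.Icc a s₀,
          f s = f a + Real.sin (s - a) • fd a + (1 - Real.cos (s - a)) • w))) := by
  have hpartA : ∀ a ∈ Set.Icc (0 : ℝ) L, ∀ s ∈ Set.Icc (0 : ℝ) L, |s - a| ≤ Real.pi →
      ∀ w : Euc n, ‖w‖ = 1 → ⟪w, fd a⟫ = 0 → 1 ≤ ‖f s - f a - w‖ := by
    intro a ha s hs habs w hw hwa
    rcases le_total a s with h | h
    · exact (aux_core hderiv hunit hlip ha hs h (le_trans (le_abs_self _) habs) hw hwa).1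
    · refine aux_rev hderiv hunit hlip ha hs h ?_ hw hwa
      calc a - s ≤ |s - a| := by rw [abs_sub_comm]; exact le_abs_self _
      _ ≤ Real.pi := habs
  refine ⟨hpartA, ?_⟩
  intro a ha s₀ hs₀ hlt hle
  constructor
  · rintro ⟨hOd, w, hw1, hw2, hw3⟩
    exact ⟨w, hw1, hw2, (aux_core hderiv hunit hlip ha hs₀ hlt.le hle hw1 hw2).2 hw3 hlt⟩
  · rintro ⟨w, hw1, hw2, harc⟩
    refine ⟨?_, w, hw1, hw2, ?_⟩
    · intro hmem
      simp only [Odisk, Set.mem_setOf_eq] at hmem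
      obtain ⟨w', hw'1, hw'2, hlt'⟩ := hmem
      rw [one_smul] at hlt'
      have hgeq := hpartA a ha s₀ hs₀
        (by rw [abs_of_nonneg (by linarith : (0:ℝ) ≤ s₀ - a)]; exact hle) w' hw'1 hw'2
      linarith
    · have hs0 := harc s₀ ⟨hlt.le, le_refl s₀⟩
      rw [hs0]
      have e : f a + Real.sin (s₀ - a) • fd a + (1 - Real.cos (s₀ - a)) • w - f a - w
          = Real.sin (s₀ - a) • fd a + (-Real.cos (s₀ - a)) • w := by
        rw [sub_smul, one_smul, neg_smul]
        abel
      rw [e]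
      have hfda : ‖fd a‖ = 1 := hunit a ha
      have hff : ⟪fd a, fd a⟫ = 1 := by rw [real_inner_self_eq_norm_sq, hfda]; norm_num
      have hww : ⟪w, w⟫ = 1 := by rw [real_inner_self_eq_norm_sq, hw1]; norm_num
      have hw2' : ⟪fd a, w⟫ = 0 := by rw [← real_inner_comm]; exact hw2
      have h2 : ‖Real.sin (s₀ - a) • fd a + (-Real.cos (s₀ - a)) • w‖ ^ 2 = 1 := by
        rw [← real_inner_self_eq_norm_sq]
        simp only [inner_add_left, inner_add_right, real_inner_smul_left,
          real_inner_smul_right, hff, hww, hw2, hw2']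
        nlinarith [Real.sin_sq_add_cos_sq (s₀ - a)]
      nlinarith [norm_nonneg (Real.sin (s₀ - a) • fd a + (-Real.cos (s₀ - a)) • w)]
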